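/- For a finite simple graph G and nonzero weight p, the weighted independence number satisfies α_G(p) = sup_{w ≠ 0} ⟨p,w⟩ / α*_{Ḡ}(w), where the supremum is over nonzero nonnegative weight functions w on V(G). -/

import Mathlib

open Finset

def IndepSet {V : Type*} [Fintype V] [DecidableEq V] (G : SimpleGraph V)
    (I : Finset V) : Prop :=
  ∀ u ∈ I, ∀ v ∈ I, u ≠ v → ¬ G.Adj u v

def IsClique' {V : Type*} [Fintype V] [DecidableEq V] (G : SimpleGraph V)
    (C : Finset V) : Prop :=
  ∀ u ∈ C, ∀ v ∈ C, u ≠ v → G.Adj u v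

noncomputable def alphaW {V : Type*} [Fintype V] [DecidableEq V]
    (G : SimpleGraph V) (p : V → ℝ) : ℝ :=
  sSup {x | ∃ I : Finset V, IndepSet G I ∧ x = ∑ v ∈ I, p v}

noncomputable def alphaStarW {V : Type*} [Fintype V] [DecidableEq V]
    (G : SimpleGraph V) (p : V → ℝ) : ℝ :=
  sSup {x | ∃ q : V → ℝ, (∀ v, 0 ≤ q v ∧ q v ≤ 1) ∧
      (∀ C : Finset V, IsClique' G C → ∑ v ∈ C, q v ≤ 1) ∧ x = ∑ v, p v * q v}

section Aux

variable {V : Type*} [Fintype V] [DecidableEq V]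

lemma alphaStar_bddAbove (H : SimpleGraph V) (w : V → ℝ) (hw : ∀ v, 0 ≤ w v) :
    BddAbove {x | ∃ q : V → ℝ, (∀ v, 0 ≤ q v ∧ q v ≤ 1) ∧
      (∀ C : Finset V, IsClique' H C → ∑ v ∈ C, q v ≤ 1) ∧ x = ∑ v, w v * q v} := by
  refine ⟨∑ v, w v, ?_⟩
  rintro x ⟨q, hq, -, rfl⟩
  refine Finset.sum_le_sum fun v _ => ?_
  calc w v * q v ≤ w v * 1 := mul_le_mul_of_nonneg_left (hq v).2 (hw v)
    _ = w v := mul_one _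

lemma alphaStar_nonempty (H : SimpleGraph V) (w : V → ℝ) :
    Set.Nonempty {x | ∃ q : V → ℝ, (∀ v, 0 ≤ q v ∧ q v ≤ 1) ∧
      (∀ C : Finset V, IsClique' H C → ∑ v ∈ C, q v ≤ 1) ∧ x = ∑ v, w v * q v} :=
  ⟨0, fun _ => 0, fun _ => ⟨le_refl _, zero_le_one⟩, fun C _ => by simp, by simp⟩

lemma le_alphaStar (H : SimpleGraph V) (w : V → ℝ) (hw : ∀ v, 0 ≤ w v)
    (q : V → ℝ) (hq : ∀ v, 0 ≤ q v ∧ q v ≤ 1)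
    (hC : ∀ C : Finset V, IsClique' H C → ∑ v ∈ C, q v ≤ 1) :
    ∑ v, w v * q v ≤ alphaStarW H w :=
  le_csSup (alphaStar_bddAbove H w hw) ⟨q, hq, hC, rfl⟩

lemma alphaStar_le (H : SimpleGraph V) (w : V → ℝ) (b : ℝ)
    (hb : ∀ q : V → ℝ, (∀ v, 0 ≤ q v ∧ q v ≤ 1) →
      (∀ C : Finset V, IsClique' H C → ∑ v ∈ C, q v ≤ 1) → ∑ v, w v * q v ≤ b) :
    alphaStarW H w ≤ b :=
  csSup_le (alphaStar_nonempty H w) (by rintro x ⟨q, hq, hC, rfl⟩; exact hb q hq hC)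

lemma alphaStar_pos (H : SimpleGraph V) (w : V → ℝ) (hw : ∀ v, 0 ≤ w v)
    (hw0 : w ≠ 0) : 0 < alphaStarW H w := by
  obtain ⟨v1, hv1⟩ : ∃ v, 0 < w v := by
    by_contra h; push_neg at h
    exact hw0 (funext fun v => le_antisymm (h v) (hw v))
  have hfeas : ∀ v, 0 ≤ (fun v => if v = v1 then (1:ℝ) else 0) v ∧
      (fun v => if v = v1 then (1:ℝ) else 0) v ≤ 1 := by
    intro v; dsimp; split <;> norm_num
  have hCq : ∀ C : Finset V, IsClique' H C →
      ∑ v ∈ C, (if v = v1 then (1:ℝ) else 0) ≤ 1 := by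
    intro C _
    rw [Finset.sum_ite_eq' C v1 (fun _ => (1:ℝ))]
    split <;> norm_num
  have := le_alphaStar H w hw _ hfeas hCq
  have hsum : ∑ v, w v * (if v = v1 then (1:ℝ) else 0) = w v1 := by
    simp [mul_ite]
  rw [hsum] at this
  exact lt_of_lt_of_le hv1 this

end Aux

theorem alpha_dual {V : Type*} [Fintype V] [DecidableEq V]
    (G : SimpleGraph V) (p : V → ℝ) (hp : ∀ v, 0 ≤ p v) (hp0 : p ≠ 0) :
    alphaW G p = sSup {x | ∃ w : V → ℝ, (∀ v, 0 ≤ w v) ∧ w ≠ 0 ∧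
      x = (∑ v, p v * w v) / alphaStarW Gᶜ w} := by
  classical
  set S := {x | ∃ I : Finset V, IndepSet G I ∧ x = ∑ v ∈ I, p v} with hS
  have hSfin : S.Finite := by
    apply Set.Finite.subset (Set.finite_range (fun I : Finset V => ∑ v ∈ I, p v))
    rintro x ⟨I, -, rfl⟩; exact ⟨I, rfl⟩
  have hSne : S.Nonempty := ⟨0, ∅, by simp [IndepSet], by simp⟩
  have hSbdd : BddAbove S := hSfin.bddAbove
  have hle : ∀ I : Finset V, IndepSet G I → ∑ v ∈ I, p v ≤ alphaW G p :=
    fun I hI => le_csSup hSbdd ⟨I, hI, rfl⟩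
  obtain ⟨v0, hv0⟩ : ∃ v, 0 < p v := by
    by_contra h; push_neg at h
    exact hp0 (funext fun v => le_antisymm (h v) (hp v))
  have hsingle : ∀ v : V, IndepSet G {v} := by
    intro v u hu v' hv' huv
    simp only [Finset.mem_singleton] at hu hv'
    subst hu; subst hv'; exact absurd rfl huv
  have hαpos : 0 < alphaW G p := by
    have h1 := hle {v0} (hsingle v0)
    simp only [Finset.sum_singleton] at h1
    linarith
  set α := alphaW G p with hα
  -- a maximum-weight independent set
  have hmem : α ∈ S := hSne.csSup_mem hSfin
  obtain ⟨I, hI, hIsum⟩ := hmem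
  have hIne : ∃ v1, v1 ∈ I := by
    by_contra h; push_neg at h
    have : I = ∅ := Finset.eq_empty_of_forall_notMem h
    rw [this] at hIsum; simp at hIsum; linarith [hIsum ▸ hαpos]
  obtain ⟨v1, hv1⟩ := hIne
  -- indicator weight of I
  set w0 : V → ℝ := fun v => if v ∈ I then 1 else 0 with hw0def
  have hw0nn : ∀ v, 0 ≤ w0 v := by intro v; dsimp [w0]; split <;> norm_num
  have hw0ne : w0 ≠ 0 := by
    intro h
    have : w0 v1 = 0 := by rw [h]; rfl
    simp [w0, hv1] at this
  have hpw0 : ∑ v, p v * w0 v = α := by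
    rw [hIsum]
    simp only [w0, mul_ite, mul_one, mul_zero]
    rw [Finset.sum_ite_mem, Finset.univ_inter]
  -- alphaStarW Gᶜ w0 = 1
  have hICl : IsClique' Gᶜ I := by
    intro u hu v hv huv
    rw [SimpleGraph.compl_adj]
    exact ⟨huv, hI u hu v hv huv⟩
  have hstar1 : alphaStarW Gᶜ w0 = 1 := by
    apply le_antisymm
    · apply alphaStar_le
      intro q hq hC
      have : ∑ v, w0 v * q v = ∑ v ∈ I, q v := by
        simp only [w0, ite_mul, one_mul, zero_mul]
        rw [Finset.sum_ite_mem, Finset.univ_inter]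
      rw [this]; exact hC I hICl
    · have hfeas : ∀ v, 0 ≤ (fun v => if v = v1 then (1:ℝ) else 0) v ∧
          (fun v => if v = v1 then (1:ℝ) else 0) v ≤ 1 := by
        intro v; dsimp; split <;> norm_num
      have hCq : ∀ C : Finset V, IsClique' Gᶜ C →
          ∑ v ∈ C, (if v = v1 then (1:ℝ) else 0) ≤ 1 := by
        intro C _
        rw [Finset.sum_ite_eq' C v1 (fun _ => (1:ℝ))]
        split <;> norm_num
      have h := le_alphaStar Gᶜ w0 hw0nn _ hfeas hCq
      have hsum : ∑ v, w0 v * (if v = v1 then (1:ℝ) else 0) = w0 v1 := by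
        simp [mul_ite]
      rw [hsum] at h
      simpa [w0, hv1] using h
  -- key upper bound
  have hkey : ∀ w : V → ℝ, (∀ v, 0 ≤ w v) →
      ∑ v, p v * w v ≤ α * alphaStarW Gᶜ w := by
    intro w hw
    set q : V → ℝ := fun v => p v / α with hqdef
    have hfeas : ∀ v, 0 ≤ q v ∧ q v ≤ 1 := by
      intro v
      constructor
      · exact div_nonneg (hp v) hαpos.le
      · rw [div_le_one hαpos]
        have h1 := hle {v} (hsingle v)
        simpa using h1
    have hCq : ∀ C : Finset V, IsClique' Gᶜ C → ∑ v ∈ C, q v ≤ 1 := by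
      intro C hC
      have hCI : IndepSet G C := by
        intro u hu v hv huv
        exact ((SimpleGraph.compl_adj G u v).1 (hC u hu v hv huv)).2
      have h1 := hle C hCI
      rw [← Finset.sum_div, div_le_one hαpos]
      exact h1
    have h := le_alphaStar Gᶜ w hw q hfeas hCq
    have hsum : ∑ v, w v * q v = (∑ v, p v * w v) / α := by
      rw [Finset.sum_div]
      refine Finset.sum_congr rfl fun v _ => ?_
      field_simp [q]
      rw [hqdef]; dsimp only; rw [mul_assoc, div_mul_cancel₀ _ hαpos.ne']
    rw [hsum, div_le_iff₀ hαpos] at h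
    linarith [h]
  -- finish
  set T := {x | ∃ w : V → ℝ, (∀ v, 0 ≤ w v) ∧ w ≠ 0 ∧
      x = (∑ v, p v * w v) / alphaStarW Gᶜ w} with hT
  have hαT : α ∈ T := ⟨w0, hw0nn, hw0ne, by rw [hpw0, hstar1, div_one]⟩
  have hub : ∀ x ∈ T, x ≤ α := by
    rintro x ⟨w, hw, hwne, rfl⟩
    have hpos := alphaStar_pos Gᶜ w hw hwne
    rw [div_le_iff₀ hpos]
    exact hkey w hw
  exact le_antisymm (le_csSup ⟨α, hub⟩ hαT) (csSup_le ⟨α, hαT⟩ hub)
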